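/- Let n ≥ 1, let y₁,…,yₙ ∈ (0,1), and let λ ∈ (0,1). Then the score function ψ is strictly decreasing on (0,∞): for all 0 < θ₁ < θ₂ one has ψ(θ₂) < ψ(θ₁). Moreover ψ(θ) → +∞ as θ → 0⁺ and ψ(θ) → Σ_{i=1}^n log yᵢ < 0 as θ → ∞. -/

import Mathlib

open Real Filter

/-- The profile score function for the shape parameter `θ` of the GTLD:
`ψ(θ) = n/θ + Σᵢ log yᵢ − 2λ Σᵢ yᵢ^θ log yᵢ/(1 + λ − 2λ yᵢ^θ)`. -/
noncomputable def psi (n : ℕ) (y : Fin n → ℝ) (lam : ℝ) (θ : ℝ) : ℝ :=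
  (n : ℝ) / θ + ∑ i, Real.log (y i) -
    2 * lam * ∑ i, (y i) ^ θ * Real.log (y i) / (1 + lam - 2 * lam * (y i) ^ θ)

/-- For `λ ∈ (0,1)` the score function `ψ` is strictly decreasing on `(0,∞)`,
tends to `+∞` as `θ → 0⁺`, and tends to `Σᵢ log yᵢ < 0` as `θ → ∞`. -/
theorem gtld_score_strict_anti (n : ℕ) (hn : 1 ≤ n) (y : Fin n → ℝ)
    (hy : ∀ i, y i ∈ Set.Ioo (0 : ℝ) 1) (lam : ℝ)
    (hlam : lam ∈ Set.Ioo (0 : ℝ) 1) :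
    (∀ θ₁ θ₂ : ℝ, 0 < θ₁ → θ₁ < θ₂ → psi n y lam θ₂ < psi n y lam θ₁) ∧
      Tendsto (psi n y lam) (nhdsWithin 0 (Set.Ioi 0)) atTop ∧
      Tendsto (psi n y lam) atTop (nhds (∑ i, Real.log (y i))) ∧
      (∑ i, Real.log (y i)) < 0 := by
  obtain ⟨hl0, hl1⟩ := hlam
  have hnpos : (0 : ℝ) < n := by exact_mod_cast hn
  haveI : Nonempty (Fin n) := Fin.pos_iff_nonempty.mp hn
  have hyi0 : ∀ i, 0 < y i := fun i => (hy i).1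
  have hyi1 : ∀ i, y i < 1 := fun i => (hy i).2
  have hL : ∀ i, Real.log (y i) < 0 := fun i => Real.log_neg (hyi0 i) (hyi1 i)
  -- basic facts about y^θ
  have hpow_pos : ∀ i (θ : ℝ), 0 < (y i) ^ θ := fun i θ => Real.rpow_pos_of_pos (hyi0 i) θ
  have hpow_lt_one : ∀ i (θ : ℝ), 0 < θ → (y i) ^ θ < 1 := fun i θ hθ =>
    Real.rpow_lt_one (le_of_lt (hyi0 i)) (hyi1 i) hθ
  have hden : ∀ i (θ : ℝ), 0 < θ → 0 < 1 + lam - 2 * lam * (y i) ^ θ := by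
    intro i θ hθ
    have h1 := hpow_lt_one i θ hθ
    nlinarith [hpow_pos i θ]
  -- monotonicity of each summand
  have hmono : ∀ i (θ₁ θ₂ : ℝ), 0 < θ₁ → θ₁ < θ₂ →
      (y i) ^ θ₁ * Real.log (y i) / (1 + lam - 2 * lam * (y i) ^ θ₁) ≤
      (y i) ^ θ₂ * Real.log (y i) / (1 + lam - 2 * lam * (y i) ^ θ₂) := by
    intro i θ₁ θ₂ hθ₁ hlt
    have hab : (y i) ^ θ₂ < (y i) ^ θ₁ :=
      Real.rpow_lt_rpow_of_exponent_gt (hyi0 i) (hyi1 i) hlt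
    have hDa := hden i θ₂ (hθ₁.trans hlt)
    have hDb := hden i θ₁ hθ₁
    rw [div_le_div_iff₀ hDb hDa]
    nlinarith [mul_pos (mul_pos (show (0:ℝ) < 1 + lam by linarith)
      (sub_pos.mpr hab)) (neg_pos.mpr (hL i))]
  refine ⟨?_, ?_, ?_, ?_⟩
  · -- strict antitonicity
    intro θ₁ θ₂ hθ₁ hlt
    have h1 : (n : ℝ) / θ₂ < (n : ℝ) / θ₁ :=
      div_lt_div_of_pos_left hnpos hθ₁ hlt
    have h2 : (∑ i, (y i) ^ θ₁ * Real.log (y i) / (1 + lam - 2 * lam * (y i) ^ θ₁)) ≤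
        (∑ i, (y i) ^ θ₂ * Real.log (y i) / (1 + lam - 2 * lam * (y i) ^ θ₂)) :=
      Finset.sum_le_sum fun i _ => hmono i θ₁ θ₂ hθ₁ hlt
    have h3 : 2 * lam * (∑ i, (y i) ^ θ₁ * Real.log (y i) / (1 + lam - 2 * lam * (y i) ^ θ₁)) ≤
        2 * lam * (∑ i, (y i) ^ θ₂ * Real.log (y i) / (1 + lam - 2 * lam * (y i) ^ θ₂)) :=
      mul_le_mul_of_nonneg_left h2 (by linarith)
    unfold psi
    linarith
  · -- tendsto atTop at 0⁺
    have h1 : Tendsto (fun θ : ℝ => (n : ℝ) / θ) (nhdsWithin 0 (Set.Ioi 0)) atTop := by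
      simpa [div_eq_mul_inv] using tendsto_inv_nhdsGT_zero.const_mul_atTop hnpos
    have hcont : ContinuousAt (fun θ : ℝ => (∑ i, Real.log (y i)) -
        2 * lam * ∑ i, (y i) ^ θ * Real.log (y i) / (1 + lam - 2 * lam * (y i) ^ θ)) 0 := by
      refine ContinuousAt.sub continuousAt_const (ContinuousAt.mul continuousAt_const ?_)
      refine tendsto_finset_sum _ fun i _ => ContinuousAt.div ?_ ?_ ?_
      · exact (Real.continuousAt_const_rpow (ne_of_gt (hyi0 i))).mul continuousAt_const
      · exact ContinuousAt.sub continuousAt_const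
          (ContinuousAt.mul continuousAt_const
            (Real.continuousAt_const_rpow (ne_of_gt (hyi0 i))))
      · simp [Real.rpow_zero]
        nlinarith
    have h2 := (hcont.tendsto).mono_left (nhdsWithin_le_nhds (s := Set.Ioi (0:ℝ)))
    have := h1.atTop_add h2
    refine this.congr fun θ => ?_
    unfold psi; ring
  · -- tendsto at atTop
    have hpow : ∀ i, Tendsto (fun θ : ℝ => (y i) ^ θ) atTop (nhds 0) :=
      fun i => tendsto_rpow_atTop_of_base_lt_one (y i)
        (by linarith [hyi0 i]) (hyi1 i)
    have hterm : ∀ i, Tendsto (fun θ : ℝ =>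
        (y i) ^ θ * Real.log (y i) / (1 + lam - 2 * lam * (y i) ^ θ)) atTop
        (nhds 0) := by
      intro i
      have hnum : Tendsto (fun θ : ℝ => (y i) ^ θ * Real.log (y i)) atTop (nhds 0) := by
        simpa using (hpow i).mul_const (Real.log (y i))
      have hd : Tendsto (fun θ : ℝ => 1 + lam - 2 * lam * (y i) ^ θ) atTop
          (nhds (1 + lam)) := by
        have := (tendsto_const_nhds (x := (1 + lam : ℝ)) (f := atTop)).sub
          ((tendsto_const_nhds (x := (2 * lam : ℝ)) (f := atTop)).mul (hpow i))
        simpa using this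
      have := hnum.div hd (by nlinarith)
      rw [zero_div] at this
      exact this
    have hsum : Tendsto (fun θ : ℝ => ∑ i, (y i) ^ θ * Real.log (y i) /
        (1 + lam - 2 * lam * (y i) ^ θ)) atTop (nhds 0) := by
      have := tendsto_finset_sum Finset.univ (fun i _ => hterm i)
      simpa using this
    have h1 : Tendsto (fun θ : ℝ => (n : ℝ) / θ) atTop (nhds 0) :=
      Tendsto.div_atTop tendsto_const_nhds tendsto_id
    have := (h1.add (tendsto_const_nhds (x := (∑ i, Real.log (y i))) (f := atTop))).sub
      ((tendsto_const_nhds (x := (2 * lam : ℝ)) (f := atTop)).mul hsum)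
    rw [zero_add, mul_zero, sub_zero] at this
    exact this
  · -- sum of logs negative
    exact Finset.sum_neg (fun i _ => hL i) Finset.univ_nonempty
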